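/- Let E be a finite-dimensional complex inner product space and u₁,…,u_k, v₁,…,v_ℓ ∈ E. Then the Gram determinant of the concatenated tuple satisfies det(Gram(u₁,…,u_k,v₁,…,v_ℓ)) ≤ det(Gram(u₁,…,u_k)) · det(Gram(v₁,…,v_ℓ)) (all quantities being nonnegative reals). Equality holds if span(u₁,…,u_k) and span(v₁,…,v_ℓ) are orthogonal. -/

import Mathlib

open scoped InnerProductSpace

/-- Gram determinant of a tuple of vectors. -/
noncomputable def gramDet {E : Type*} [NormedAddCommGroup E]
    [InnerProductSpace ℂ E] {m : Type*} [Fintype m] [DecidableEq m]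
    (a : m → E) : ℂ :=
  Matrix.det (Matrix.of fun i j => ⟪a i, a j⟫_ℂ)

open Finset Submodule InnerProductSpace

section Helpers

variable {E : Type*} [NormedAddCommGroup E] [InnerProductSpace ℂ E]

instance finWFLT (n : ℕ) : WellFoundedLT (Fin n) := inferInstance


lemma gs_inner_span {n : ℕ} (f : Fin n → E) (i : Fin n) {x : E}
    (hx : x ∈ span ℂ (gramSchmidt ℂ f '' Set.Iio i)) :
    ⟪gramSchmidt ℂ f i, x⟫_ℂ = 0 := by
  induction hx using Submodule.span_induction with
  | mem y hy =>
      obtain ⟨p, hp, rfl⟩ := hy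
      exact gramSchmidt_orthogonal ℂ f (ne_of_gt hp)
  | zero => exact inner_zero_right _
  | add y z _ _ hy hz => rw [inner_add_right, hy, hz, add_zero]
  | smul c y _ hy => rw [inner_smul_right, hy, mul_zero]

lemma gs_sub_mem_span {n : ℕ} (f : Fin n → E) (i : Fin n) :
    f i - gramSchmidt ℂ f i ∈ span ℂ (gramSchmidt ℂ f '' Set.Iio i) := by
  rw [gramSchmidt_def ℂ f i, sub_sub_cancel]
  refine Submodule.sum_mem _ fun p hp => ?_
  have h1 : (↑(orthogonalProjection (ℂ ∙ gramSchmidt ℂ f p) (f i)) : E)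
      ∈ (ℂ ∙ gramSchmidt ℂ f p) := SetLike.coe_mem _
  refine Submodule.span_mono ?_ h1
  rw [Set.singleton_subset_iff]
  exact Set.mem_image_of_mem _ (Finset.mem_Iio.mp hp)

lemma gs_norm_le {n : ℕ} (f : Fin n → E) (i : Fin n) {t : E}
    (ht : t ∈ span ℂ (f '' Set.Iio i)) :
    ‖gramSchmidt ℂ f i‖ ≤ ‖f i - t‖ := by
  have hspan : span ℂ (f '' Set.Iio i) = span ℂ (gramSchmidt ℂ f '' Set.Iio i) :=
    (span_gramSchmidt_Iio ℂ f i).symm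
  set x : E := (f i - gramSchmidt ℂ f i) - t with hx
  have hxmem : x ∈ span ℂ (gramSchmidt ℂ f '' Set.Iio i) := by
    refine Submodule.sub_mem _ (gs_sub_mem_span f i) ?_
    rwa [← hspan]
  have hperp : ⟪gramSchmidt ℂ f i, x⟫_ℂ = 0 := gs_inner_span f i hxmem
  have hdecomp : f i - t = gramSchmidt ℂ f i + x := by rw [hx]; abel
  have hsq : ‖f i - t‖ ^ 2 = ‖gramSchmidt ℂ f i‖ ^ 2 + ‖x‖ ^ 2 := by
    rw [hdecomp, @norm_add_sq ℂ _ _ _ _ , hperp]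
    simp
  have h1 : ‖gramSchmidt ℂ f i‖ ^ 2 ≤ ‖f i - t‖ ^ 2 := by
    rw [hsq]; nlinarith [sq_nonneg ‖x‖]
  nlinarith [norm_nonneg (gramSchmidt ℂ f i), norm_nonneg (f i - t), h1]

/-- Gram det = product of squared norms of Gram-Schmidt vectors. -/
lemma gramDet_eq_prod (n : ℕ) (f : Fin n → E) :
    Matrix.det (Matrix.of fun i j : Fin n => ⟪f i, f j⟫_ℂ)
      = ((∏ i : Fin n, ‖gramSchmidt ℂ f i‖ ^ 2 : ℝ) : ℂ) := by
  set g := gramSchmidt ℂ f with hg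
  set M : Matrix (Fin n) (Fin n) ℂ := Matrix.of fun i j => ⟪g i, f j⟫_ℂ with hM
  set T : Matrix (Fin n) (Fin n) ℂ :=
    Matrix.of (fun i p => if p = i then 1 else ⟪g p, f i⟫_ℂ / (‖g p‖ : ℂ) ^ 2) with hT
  have hTlow : T.BlockTriangular OrderDual.toDual := by
    intro i p hip
    simp only [OrderDual.toDual_lt_toDual] at hip
    have : ⟪g p, f i⟫_ℂ = 0 := gramSchmidt_inv_triangular ℂ f hip
    simp [hT, this, hip.ne']
  have hf : ∀ i, f i = ∑ p, T i p • g p := by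
    intro i
    rw [← Finset.sum_subset (Finset.subset_univ (insert i (Finset.Iio i)))
      (fun p _ hp => ?_)]
    · rw [Finset.sum_insert (by simp)]
      have h1 : T i i • g i = g i := by simp [hT]
      have h2 : ∀ p ∈ Finset.Iio i, T i p • g p
          = (⟪g p, f i⟫_ℂ / (‖g p‖ : ℂ) ^ 2) • g p := by
        intro p hp
        simp [hT, (Finset.mem_Iio.mp hp).ne]
      rw [h1, Finset.sum_congr rfl h2]
      exact gramSchmidt_def'' ℂ f i
    · simp only [Finset.mem_insert, Finset.mem_Iio, not_or, not_lt] at hp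
      have hlt : i < p := lt_of_le_of_ne hp.2 (Ne.symm hp.1)
      have h0 : ⟪g p, f i⟫_ℂ = 0 := gramSchmidt_inv_triangular ℂ f hlt
      simp [hT, hp.1, h0]
  have hGram : (Matrix.of fun i j => ⟪f i, f j⟫_ℂ) = T.map star * M := by
    ext i j
    simp only [Matrix.mul_apply, Matrix.map_apply, Matrix.of_apply, hM]
    calc ⟪f i, f j⟫_ℂ = ⟪∑ p, T i p • g p, f j⟫_ℂ := by rw [← hf]
      _ = ∑ p, star (T i p) * ⟪g p, f j⟫_ℂ := by
          rw [sum_inner]; simp [inner_smul_left]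
  have hdetT : T.det = 1 := by
    rw [Matrix.det_of_lowerTriangular T hTlow]
    simp [hT]
  have hMdiag : ∀ i, M i i = ((‖g i‖ : ℝ) ^ 2 : ℂ) := by
    intro i
    have hdec : f i = g i + (f i - g i) := by abel
    have : ⟪g i, f i⟫_ℂ = ⟪g i, g i⟫_ℂ := by
      conv_lhs => rw [hdec]
      rw [inner_add_right, gs_inner_span f i (gs_sub_mem_span f i), add_zero]
    simp only [hM, Matrix.of_apply, this, inner_self_eq_norm_sq_to_K]
    norm_num
  have hMup : M.BlockTriangular id := by
    intro i j hij
    simp only [id] at hij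
    exact gramSchmidt_inv_triangular ℂ f hij
  have hdetM : M.det = ∏ i, ((‖g i‖ : ℝ) ^ 2 : ℂ) := by
    rw [Matrix.det_of_upperTriangular hMup]
    exact Finset.prod_congr rfl fun i _ => hMdiag i
  rw [hGram, Matrix.det_mul, hdetM]
  have : (T.map star).det = 1 := by
    have : T.map star = (Matrix.transpose T).conjTranspose := by ext i j; simp [Matrix.conjTranspose_apply]
    rw [this, Matrix.det_conjTranspose, Matrix.det_transpose, hdetT, star_one]
  rw [this, one_mul]
  push_cast
  ring

lemma gs_castLE {N k : ℕ} (h : k ≤ N) (f : Fin N → E) :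
    ∀ i : Fin k, gramSchmidt ℂ (f ∘ Fin.castLE h) i = gramSchmidt ℂ f (Fin.castLE h i) := by
  suffices H : ∀ n : ℕ, ∀ i : Fin k, (i : ℕ) < n →
      gramSchmidt ℂ (f ∘ Fin.castLE h) i = gramSchmidt ℂ f (Fin.castLE h i) from
    fun i => H (k + 1) i (by omega)
  intro n
  induction n with
  | zero => exact fun i hi => absurd hi (by omega)
  | succ n IH =>
    intro i hi
    rw [gramSchmidt_def ℂ (f ∘ Fin.castLE h) i, gramSchmidt_def ℂ f (Fin.castLE h i)]
    have hsum : ∑ p ∈ Finset.Iio i,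
          (ℂ ∙ gramSchmidt ℂ (f ∘ Fin.castLE h) p).starProjection
            ((f ∘ Fin.castLE h) i)
        = ∑ q ∈ Finset.Iio (Fin.castLE h i),
          (ℂ ∙ gramSchmidt ℂ f q).starProjection (f (Fin.castLE h i)) := by
      refine Finset.sum_bij' (fun p _ => Fin.castLE h p)
        (fun q hq => ⟨(q : ℕ), lt_trans (by
          have := Finset.mem_Iio.mp hq
          rw [Fin.lt_def] at this
          exact this) i.isLt⟩)
        (fun p hp => Finset.mem_Iio.mpr (by
          have := Finset.mem_Iio.mp hp
          rw [Fin.lt_def] at this ⊢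
          exact this))
        (fun q hq => Finset.mem_Iio.mpr (by
          have := Finset.mem_Iio.mp hq
          rw [Fin.lt_def] at this ⊢
          exact this))
        (fun p hp => by ext; rfl) (fun q hq => by ext; rfl) ?_
      intro p hp
      have hp' : (p : ℕ) < (i : ℕ) := by
        have := Finset.mem_Iio.mp hp
        rwa [Fin.lt_def] at this
      have hplt : (p : ℕ) < n := by omega
      rw [IH p hplt]
      rfl
    rw [hsum]
    rfl

lemma gramDet_fin {n : ℕ} (f : Fin n → E) :
    gramDet f = ((∏ i : Fin n, ‖gramSchmidt ℂ f i‖ ^ 2 : ℝ) : ℂ) :=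
  gramDet_eq_prod n f

end Helpers

/-- The Gram determinant of a concatenated tuple is a nonnegative real number,
bounded above by the product of the Gram determinants of the two pieces, with
equality when the spans of the two tuples are orthogonal.
(This is `‖U ∨ V‖ ≤ ‖U‖ · ‖V‖` for decomposable multivectors.) -/
theorem gram_det_append_le {E : Type*} [NormedAddCommGroup E]
    [InnerProductSpace ℂ E] [FiniteDimensional ℂ E] {k ℓ : ℕ}
    (u : Fin k → E) (v : Fin ℓ → E) :
    (gramDet (Sum.elim u v)).im = 0 ∧ 0 ≤ (gramDet (Sum.elim u v)).re ∧
    (gramDet u).im = 0 ∧ 0 ≤ (gramDet u).re ∧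
    (gramDet v).im = 0 ∧ 0 ≤ (gramDet v).re ∧
    (gramDet (Sum.elim u v)).re ≤ (gramDet u).re * (gramDet v).re ∧
    ((∀ i j, ⟪u i, v j⟫_ℂ = 0) →
      (gramDet (Sum.elim u v)).re = (gramDet u).re * (gramDet v).re) := by
  set w : Fin (k + ℓ) → E := Fin.append u v with hw
  -- reindexing
  have hre : gramDet (Sum.elim u v) = gramDet w := by
    have hmat : (Matrix.of fun i j : Fin k ⊕ Fin ℓ => ⟪Sum.elim u v i, Sum.elim u v j⟫_ℂ)
        = (Matrix.of fun i j : Fin (k + ℓ) => ⟪w i, w j⟫_ℂ).submatrix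
            finSumFinEquiv finSumFinEquiv := by
      ext i j
      have hwe : ∀ i : Fin k ⊕ Fin ℓ, w (finSumFinEquiv i) = Sum.elim u v i := by
        rintro (a | b)
        · exact Fin.append_left u v a
        · exact Fin.append_right u v b
      simp [Matrix.submatrix_apply, hwe]
    rw [gramDet, gramDet, hmat, Matrix.det_submatrix_equiv_self]
  -- castLE locality
  have hkle : k ≤ k + ℓ := Nat.le_add_right k ℓ
  have hcomp : w ∘ Fin.castLE hkle = u := funext fun i => Fin.append_left u v i
  have hfirst : ∀ i : Fin k, gramSchmidt ℂ w (Fin.castAdd ℓ i) = gramSchmidt ℂ u i := by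
    intro i
    rw [← hcomp]
    exact (gs_castLE hkle w i).symm
  -- second-block comparison
  have hsecond : ∀ j : Fin ℓ, ‖gramSchmidt ℂ w (Fin.natAdd k j)‖ ≤ ‖gramSchmidt ℂ v j‖ := by
    intro j
    have ht : v j - gramSchmidt ℂ v j ∈ span ℂ (v '' Set.Iio j) := by
      have := gs_sub_mem_span v j
      rwa [span_gramSchmidt_Iio] at this
    have himage : v '' Set.Iio j ⊆ w '' Set.Iio (Fin.natAdd k j) := by
      rintro x ⟨p, hp, rfl⟩
      refine ⟨Fin.natAdd k p, ?_, Fin.append_right u v p⟩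
      rw [Set.mem_Iio, Fin.lt_def]
      simpa using (Fin.lt_def.mp hp)
    have htw : v j - gramSchmidt ℂ v j ∈ span ℂ (w '' Set.Iio (Fin.natAdd k j)) :=
      Submodule.span_mono himage ht
    have hle := gs_norm_le w (Fin.natAdd k j) htw
    have hwj : w (Fin.natAdd k j) = v j := Fin.append_right u v j
    rw [hwj] at hle
    simpa using hle
  -- real product formulas
  have hu := gramDet_fin u
  have hv := gramDet_fin v
  have hwdet := gramDet_fin w
  have husq : (0:ℝ) ≤ ∏ i : Fin k, ‖gramSchmidt ℂ u i‖ ^ 2 :=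
    Finset.prod_nonneg fun _ _ => sq_nonneg _
  have hvsq : (0:ℝ) ≤ ∏ i : Fin ℓ, ‖gramSchmidt ℂ v i‖ ^ 2 :=
    Finset.prod_nonneg fun _ _ => sq_nonneg _
  have hwsq : (0:ℝ) ≤ ∏ i : Fin (k + ℓ), ‖gramSchmidt ℂ w i‖ ^ 2 :=
    Finset.prod_nonneg fun _ _ => sq_nonneg _
  have hsplit : (∏ i : Fin (k + ℓ), ‖gramSchmidt ℂ w i‖ ^ 2)
      = (∏ i : Fin k, ‖gramSchmidt ℂ w (Fin.castAdd ℓ i)‖ ^ 2)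
        * ∏ j : Fin ℓ, ‖gramSchmidt ℂ w (Fin.natAdd k j)‖ ^ 2 :=
    Fin.prod_univ_add fun i => ‖gramSchmidt ℂ w i‖ ^ 2
  have hmain : (∏ i : Fin (k + ℓ), ‖gramSchmidt ℂ w i‖ ^ 2)
      ≤ (∏ i : Fin k, ‖gramSchmidt ℂ u i‖ ^ 2) * ∏ i : Fin ℓ, ‖gramSchmidt ℂ v i‖ ^ 2 := by
    rw [hsplit]
    have h1 : (∏ i : Fin k, ‖gramSchmidt ℂ w (Fin.castAdd ℓ i)‖ ^ 2)
        = ∏ i : Fin k, ‖gramSchmidt ℂ u i‖ ^ 2 := by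
      exact Finset.prod_congr rfl fun i _ => by rw [hfirst i]
    rw [h1]
    refine mul_le_mul_of_nonneg_left ?_ husq
    exact Finset.prod_le_prod (fun _ _ => sq_nonneg _)
      (fun j _ => pow_le_pow_left₀ (norm_nonneg _) (hsecond j) 2)
  refine ⟨by rw [hre, hwdet]; exact Complex.ofReal_im _,
    by rw [hre, hwdet, Complex.ofReal_re]; exact hwsq,
    by rw [hu]; exact Complex.ofReal_im _,
    by rw [hu, Complex.ofReal_re]; exact husq,
    by rw [hv]; exact Complex.ofReal_im _,
    by rw [hv, Complex.ofReal_re]; exact hvsq,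
    ?_, ?_⟩
  · rw [hre, hwdet, hu, hv, Complex.ofReal_re, Complex.ofReal_re, Complex.ofReal_re]
    exact hmain
  · intro hortho
    have hblock : (Matrix.of fun i j : Fin k ⊕ Fin ℓ => ⟪Sum.elim u v i, Sum.elim u v j⟫_ℂ)
        = Matrix.fromBlocks (Matrix.of fun i j : Fin k => ⟪u i, u j⟫_ℂ) 0 0
            (Matrix.of fun i j : Fin ℓ => ⟪v i, v j⟫_ℂ) := by
      ext i j
      rcases i with a | b <;> rcases j with c | d
      · rfl
      · simpa using hortho a d
      · simpa using inner_eq_zero_symm.mpr (hortho c b)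
      · rfl
    have : gramDet (Sum.elim u v) = gramDet u * gramDet v := by
      rw [gramDet, hblock, Matrix.det_fromBlocks_zero₂₁]
      rfl
    rw [this, hu, hv, ← Complex.ofReal_mul, Complex.ofReal_re,
      Complex.ofReal_re, Complex.ofReal_re]
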